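/- Let V₁(a,b,c) = √(2π)·E[√(a²X²+b²Y²+c²Z²)] with X,Y,Z i.i.d. standard normal, viewed as a function on (0,∞)³. If a ≥ b ≥ c > 0 then ∂V₁/∂a ≥ ∂V₁/∂b ≥ ∂V₁/∂c, with strict inequality in the first place when a > b and in the second when b > c. -/

import Mathlib

open MeasureTheory ProbabilityTheory
open scoped ENNReal NNReal

/-- The product of three standard Gaussian measures on `ℝ × ℝ × ℝ`. -/
noncomputable def gauss3 : Measure (ℝ × ℝ × ℝ) :=
  (gaussianReal 0 1).prod ((gaussianReal 0 1).prod (gaussianReal 0 1))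

/-- `V₁(a,b,c) = √(2π)·E[√(a²X²+b²Y²+c²Z²)]`. -/
noncomputable def V1 (a b c : ℝ) : ℝ :=
  Real.sqrt (2 * Real.pi) *
    ∫ p : ℝ × ℝ × ℝ,
      Real.sqrt (a ^ 2 * p.1 ^ 2 + b ^ 2 * p.2.1 ^ 2 + c ^ 2 * p.2.2 ^ 2) ∂gauss3

instance : IsProbabilityMeasure gauss3 := by unfold gauss3; infer_instance

lemma g1_singleton (x : ℝ) : gaussianReal 0 1 {x} = 0 :=
  gaussianReal_absolutelyContinuous 0 one_ne_zero (by simp)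

lemma sqrt_add_le' {A B : ℝ} (hA : 0 ≤ A) (hB : 0 ≤ B) :
    Real.sqrt (A + B) ≤ Real.sqrt A + Real.sqrt B := by
  rw [show Real.sqrt A + Real.sqrt B = Real.sqrt ((Real.sqrt A + Real.sqrt B) ^ 2) from
    (Real.sqrt_sq (by positivity)).symm]
  apply Real.sqrt_le_sqrt
  nlinarith [Real.sq_sqrt hA, Real.sq_sqrt hB, Real.sqrt_nonneg A, Real.sqrt_nonneg B]

lemma ae_ne_zero : ∀ᵐ p : ℝ × ℝ × ℝ ∂gauss3, p.1 ≠ 0 ∧ p.2.1 ≠ 0 ∧ p.2.2 ≠ 0 := by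
  rw [MeasureTheory.ae_iff]
  refine measure_mono_null (fun p hp => ?_)
    (?_ : gauss3 ({p : ℝ × ℝ × ℝ | p.1 = 0} ∪ {p | p.2.1 = 0} ∪ {p | p.2.2 = 0}) = 0)
  · simp only [Set.mem_setOf_eq, not_and_or, not_not] at hp
    rcases hp with h | h | h <;> simp [Set.mem_setOf_eq, h]
  · refine measure_union_null (measure_union_null ?_ ?_) ?_
    · have : {p : ℝ × ℝ × ℝ | p.1 = 0} = ({0} : Set ℝ) ×ˢ (Set.univ : Set (ℝ × ℝ)) := by
        ext ⟨x, y, z⟩; simp [Set.mem_prod, eq_comm]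
      rw [this]; unfold gauss3; rw [Measure.prod_prod, g1_singleton]; simp
    · have : {p : ℝ × ℝ × ℝ | p.2.1 = 0} =
          (Set.univ : Set ℝ) ×ˢ (({0} : Set ℝ) ×ˢ (Set.univ : Set ℝ)) := by
        ext ⟨x, y, z⟩; simp [Set.mem_prod, eq_comm]
      rw [this]; unfold gauss3; rw [Measure.prod_prod, Measure.prod_prod, g1_singleton]; simp
    · have : {p : ℝ × ℝ × ℝ | p.2.2 = 0} =
          (Set.univ : Set ℝ) ×ˢ ((Set.univ : Set ℝ) ×ˢ ({0} : Set ℝ)) := by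
        ext ⟨x, y, z⟩; simp [Set.mem_prod, eq_comm]
      rw [this]; unfold gauss3; rw [Measure.prod_prod, Measure.prod_prod, g1_singleton]; simp

lemma integrable_abs_g1 : Integrable (fun x => |x|) (gaussianReal 0 1) := by
  rw [gaussianReal_of_var_ne_zero 0 one_ne_zero,
    integrable_withDensity_iff (measurable_gaussianPDF 0 1)
      (Filter.Eventually.of_forall fun x => ENNReal.ofReal_lt_top)]
  have hint : Integrable (fun x : ℝ => (Real.sqrt (2 * Real.pi))⁻¹ *
      |x * Real.exp (-(2:ℝ)⁻¹ * x ^ 2)|) volume :=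
    (integrable_mul_exp_neg_mul_sq (b := (2:ℝ)⁻¹) (by norm_num)).abs.const_mul _
  refine hint.mono ?_ (Filter.Eventually.of_forall fun x => ?_)
  · exact (measurable_abs.mul ((measurable_gaussianPDF 0 1).ennreal_toReal)).aestronglyMeasurable
  · have h1 : (gaussianPDF 0 1 x).toReal = gaussianPDFReal 0 1 x :=
      ENNReal.toReal_ofReal (gaussianPDFReal_nonneg 0 1 x)
    rw [Real.norm_eq_abs, Real.norm_eq_abs, h1]
    simp only [gaussianPDFReal, NNReal.coe_one, mul_one, sub_zero]
    rw [show -x ^ 2 / 2 = -(2:ℝ)⁻¹ * x ^ 2 by ring]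
    simp only [abs_mul, abs_abs, abs_of_nonneg (Real.exp_nonneg _),
      abs_of_nonneg (inv_nonneg.2 (Real.sqrt_nonneg (2 * Real.pi)))]
    apply le_of_eq
    ring

lemma map_fst_gauss3 : Measure.map Prod.fst gauss3 = gaussianReal 0 1 := by
  unfold gauss3; rw [Measure.map_fst_prod]; simp

lemma map_snd_gauss3 :
    Measure.map Prod.snd gauss3 = (gaussianReal 0 1).prod (gaussianReal 0 1) := by
  unfold gauss3; rw [Measure.map_snd_prod]; simp

lemma map_21_gauss3 : Measure.map (fun p : ℝ × ℝ × ℝ => p.2.1) gauss3 = gaussianReal 0 1 := by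
  rw [show (fun p : ℝ × ℝ × ℝ => p.2.1) = Prod.fst ∘ Prod.snd from rfl,
    ← Measure.map_map measurable_fst measurable_snd, map_snd_gauss3, Measure.map_fst_prod]
  simp

lemma map_22_gauss3 : Measure.map (fun p : ℝ × ℝ × ℝ => p.2.2) gauss3 = gaussianReal 0 1 := by
  rw [show (fun p : ℝ × ℝ × ℝ => p.2.2) = Prod.snd ∘ Prod.snd from rfl,
    ← Measure.map_map measurable_snd measurable_snd, map_snd_gauss3, Measure.map_snd_prod]
  simp

lemma integrable_abs_coord {f : ℝ × ℝ × ℝ → ℝ} (hf : Measurable f)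
    (hmap : Measure.map f gauss3 = gaussianReal 0 1) :
    Integrable (fun p => |f p|) gauss3 := by
  have h2 : Integrable (fun x => |x|) (Measure.map f gauss3) := by
    rw [hmap]; exact integrable_abs_g1
  exact (integrable_map_measure measurable_abs.aestronglyMeasurable hf.aemeasurable).mp h2

lemma int_abs_1 : Integrable (fun p : ℝ × ℝ × ℝ => |p.1|) gauss3 :=
  integrable_abs_coord measurable_fst map_fst_gauss3
lemma int_abs_21 : Integrable (fun p : ℝ × ℝ × ℝ => |p.2.1|) gauss3 :=
  integrable_abs_coord (measurable_fst.comp measurable_snd) map_21_gauss3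
lemma int_abs_22 : Integrable (fun p : ℝ × ℝ × ℝ => |p.2.2|) gauss3 :=
  integrable_abs_coord (measurable_snd.comp measurable_snd) map_22_gauss3

lemma key_deriv (u K : ℝ × ℝ × ℝ → ℝ) (hu : Measurable u) (hK : Measurable K)
    (hKpos : ∀ᵐ p ∂gauss3, 0 < K p)
    (hui : Integrable (fun p => |u p|) gauss3)
    (hKi : Integrable (fun p => Real.sqrt (K p)) gauss3) (x₀ : ℝ) :
    Integrable (fun p => x₀ * u p ^ 2 / Real.sqrt (x₀ ^ 2 * u p ^ 2 + K p)) gauss3 ∧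
    HasDerivAt (fun x => ∫ p, Real.sqrt (x ^ 2 * u p ^ 2 + K p) ∂gauss3)
      (∫ p, x₀ * u p ^ 2 / Real.sqrt (x₀ ^ 2 * u p ^ 2 + K p) ∂gauss3) x₀ := by
  have hmeasF : ∀ x : ℝ, Measurable fun p => Real.sqrt (x ^ 2 * u p ^ 2 + K p) := fun x =>
    (((hu.pow_const 2).const_mul _).add hK).sqrt
  refine hasDerivAt_integral_of_dominated_loc_of_deriv_le (s := Metric.ball x₀ 1) (Metric.ball_mem_nhds x₀ one_pos)
    (F := fun x p => Real.sqrt (x ^ 2 * u p ^ 2 + K p))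
    (F' := fun x p => x * u p ^ 2 / Real.sqrt (x ^ 2 * u p ^ 2 + K p))
    (bound := fun p => |u p|) ?_ ?_ ?_ ?_ ?_ ?_
  · exact Filter.Eventually.of_forall fun x => (hmeasF x).aestronglyMeasurable
  · -- integrability of F x₀
    refine (((hui.const_mul |x₀|).add hKi).mono ((hmeasF x₀).aestronglyMeasurable)
      (Filter.Eventually.of_forall fun p => ?_))
    rw [Real.norm_eq_abs, abs_of_nonneg (Real.sqrt_nonneg _), Real.norm_eq_abs]
    have h1 : Real.sqrt (x₀ ^ 2 * u p ^ 2 + K p) ≤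
        Real.sqrt (x₀ ^ 2 * u p ^ 2) + Real.sqrt (K p) ∨ True := Or.inr trivial
    by_cases hKp : 0 ≤ K p
    · calc Real.sqrt (x₀ ^ 2 * u p ^ 2 + K p)
          ≤ Real.sqrt (x₀ ^ 2 * u p ^ 2) + Real.sqrt (K p) :=
            sqrt_add_le' (by positivity) hKp
        _ = |x₀| * |u p| + Real.sqrt (K p) := by
            rw [show x₀ ^ 2 * u p ^ 2 = (x₀ * u p) ^ 2 by ring, Real.sqrt_sq_eq_abs, abs_mul]
        _ ≤ |(|x₀| * |u p| + Real.sqrt (K p))| := le_abs_self _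
    · push_neg at hKp
      calc Real.sqrt (x₀ ^ 2 * u p ^ 2 + K p) ≤ Real.sqrt (x₀ ^ 2 * u p ^ 2) :=
            Real.sqrt_le_sqrt (by linarith)
        _ = |x₀| * |u p| := by
            rw [show x₀ ^ 2 * u p ^ 2 = (x₀ * u p) ^ 2 by ring, Real.sqrt_sq_eq_abs, abs_mul]
        _ ≤ |(|x₀| * |u p| + Real.sqrt (K p))| := by
            rw [abs_of_nonneg (add_nonneg (mul_nonneg (abs_nonneg _) (abs_nonneg _))
              (Real.sqrt_nonneg _))]
            exact le_add_of_nonneg_right (Real.sqrt_nonneg _)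
  · exact (((hu.pow_const 2).const_mul _).div
      (((hu.pow_const 2).const_mul _).add hK).sqrt).aestronglyMeasurable
  · -- bound
    refine hKpos.mono fun p hKp x _ => ?_
    rw [Real.norm_eq_abs]
    rcases eq_or_ne (x * u p) 0 with h0 | h0
    · rcases mul_eq_zero.mp h0 with h | h <;> simp [h, abs_nonneg]
    · have hxu : 0 < |x| * |u p| := by
        rw [← abs_mul]; exact abs_pos.mpr h0
      have hden : |x| * |u p| ≤ Real.sqrt (x ^ 2 * u p ^ 2 + K p) := by
        rw [← abs_mul, ← Real.sqrt_sq_eq_abs, show (x * u p) ^ 2 = x ^ 2 * u p ^ 2 by ring]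
        exact Real.sqrt_le_sqrt (by linarith)
      have hden' : 0 < Real.sqrt (x ^ 2 * u p ^ 2 + K p) := lt_of_lt_of_le hxu hden
      rw [abs_div, abs_of_nonneg hden'.le, div_le_iff₀ hden', abs_mul, ← pow_abs]
      calc |x| * |u p| ^ 2 = (|x| * |u p|) * |u p| := by ring
        _ ≤ Real.sqrt (x ^ 2 * u p ^ 2 + K p) * |u p| :=
            mul_le_mul_of_nonneg_right hden (abs_nonneg _)
        _ = |u p| * Real.sqrt (x ^ 2 * u p ^ 2 + K p) := mul_comm _ _
  · exact hui
  · -- differentiability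
    refine hKpos.mono fun p hKp x _ => ?_
    have hpos : 0 < x ^ 2 * u p ^ 2 + K p := by positivity
    have hd : HasDerivAt (fun y : ℝ => y ^ 2 * u p ^ 2 + K p) (2 * x * u p ^ 2) x := by
      have h := ((hasDerivAt_pow 2 x).mul_const (u p ^ 2)).add_const (K p)
      refine h.congr_deriv (Eq.symm ?_)
      norm_num
    have := hd.sqrt hpos.ne'
    refine this.congr_deriv (Eq.symm ?_)
    rw [eq_div_iff (by positivity)]
    field_simp

lemma div_sqrt_le {a b S T : ℝ} (hS : 0 < S) (hT : 0 < T) (ha : 0 ≤ a) (hb : 0 ≤ b)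
    (h : b ^ 2 * S ≤ a ^ 2 * T) : b / Real.sqrt T ≤ a / Real.sqrt S := by
  rw [div_le_div_iff₀ (Real.sqrt_pos.2 hT) (Real.sqrt_pos.2 hS)]
  rw [show b * Real.sqrt S = Real.sqrt (b ^ 2 * S) by
      rw [Real.sqrt_mul (sq_nonneg b), Real.sqrt_sq hb],
    show a * Real.sqrt T = Real.sqrt (a ^ 2 * T) by
      rw [Real.sqrt_mul (sq_nonneg a), Real.sqrt_sq ha]]
  exact Real.sqrt_le_sqrt h

lemma div_sqrt_lt {a b S T : ℝ} (hS : 0 < S) (hT : 0 < T) (ha : 0 ≤ a) (hb : 0 ≤ b)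
    (h : b ^ 2 * S < a ^ 2 * T) : b / Real.sqrt T < a / Real.sqrt S := by
  rw [div_lt_div_iff₀ (Real.sqrt_pos.2 hT) (Real.sqrt_pos.2 hS)]
  rw [show b * Real.sqrt S = Real.sqrt (b ^ 2 * S) by
      rw [Real.sqrt_mul (sq_nonneg b), Real.sqrt_sq hb],
    show a * Real.sqrt T = Real.sqrt (a ^ 2 * T) by
      rw [Real.sqrt_mul (sq_nonneg a), Real.sqrt_sq ha]]
  exact Real.sqrt_lt_sqrt (by positivity) h

lemma mp_swap12 : MeasurePreserving (fun p : ℝ × ℝ × ℝ => (p.2.1, p.1, p.2.2)) gauss3 gauss3 := by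
  have h1 : MeasurePreserving (⇑MeasurableEquiv.prodAssoc ∘ Prod.map Prod.swap id ∘
      ⇑(MeasurableEquiv.prodAssoc (α := ℝ) (β := ℝ) (γ := ℝ)).symm) gauss3 gauss3 := by
    unfold gauss3
    exact (MeasureTheory.measurePreserving_prodAssoc _ _ _).comp
      ((Measure.measurePreserving_swap.prod (MeasurePreserving.id _)).comp
        ((MeasureTheory.measurePreserving_prodAssoc _ _ _).symm MeasurableEquiv.prodAssoc))
  have h2 : (⇑MeasurableEquiv.prodAssoc ∘ Prod.map Prod.swap id ∘
      ⇑(MeasurableEquiv.prodAssoc (α := ℝ) (β := ℝ) (γ := ℝ)).symm) =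
      fun p : ℝ × ℝ × ℝ => (p.2.1, p.1, p.2.2) := by
    funext p; rfl
  rwa [h2] at h1

lemma mp_swap23 : MeasurePreserving (fun p : ℝ × ℝ × ℝ => (p.1, p.2.2, p.2.1)) gauss3 gauss3 := by
  have h1 : MeasurePreserving (Prod.map (id : ℝ → ℝ) (Prod.swap : ℝ × ℝ → ℝ × ℝ))
      gauss3 gauss3 := by
    unfold gauss3
    exact (MeasurePreserving.id _).prod Measure.measurePreserving_swap
  have h2 : Prod.map (id : ℝ → ℝ) (Prod.swap : ℝ × ℝ → ℝ × ℝ) =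
      fun p : ℝ × ℝ × ℝ => (p.1, p.2.2, p.2.1) := by
    funext p; rfl
  rwa [h2] at h1

lemma integral_pos_of_ae_pos {f : ℝ × ℝ × ℝ → ℝ} (hf : Integrable f gauss3)
    (h : ∀ᵐ p ∂gauss3, 0 < f p) : 0 < ∫ p, f p ∂gauss3 := by
  rw [integral_pos_iff_support_of_nonneg_ae (h.mono fun p hp => hp.le) hf]
  have hnull : gauss3 {p | ¬ 0 < f p} = 0 := by rw [← MeasureTheory.ae_iff]; exact h
  by_contra hcon
  push_neg at hcon
  have hsup : gauss3 (Function.support f) = 0 := le_antisymm hcon zero_le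
  have : gauss3 Set.univ ≤ (0 : ℝ≥0∞) := by
    calc gauss3 Set.univ ≤ gauss3 (Function.support f ∪ {p | ¬ 0 < f p}) := by
          apply measure_mono
          intro p _
          by_cases hp : 0 < f p
          · exact Or.inl (by simp [Function.mem_support, hp.ne'])
          · exact Or.inr hp
      _ ≤ gauss3 (Function.support f) + gauss3 {p | ¬ 0 < f p} := measure_union_le _ _
      _ = 0 := by rw [hsup, hnull, add_zero]
  simp at this

lemma sqrtK_int {s t : ℝ} {f g : ℝ × ℝ × ℝ → ℝ}
    (hf : Measurable f) (hg : Measurable g)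
    (hfi : Integrable (fun p => |f p|) gauss3) (hgi : Integrable (fun p => |g p|) gauss3) :
    Integrable (fun p => Real.sqrt (s ^ 2 * f p ^ 2 + t ^ 2 * g p ^ 2)) gauss3 := by
  refine ((hfi.const_mul |s|).add (hgi.const_mul |t|)).mono
    ((((hf.pow_const 2).const_mul _).add ((hg.pow_const 2).const_mul _)).sqrt).aestronglyMeasurable
    (Filter.Eventually.of_forall fun p => ?_)
  rw [Real.norm_eq_abs, abs_of_nonneg (Real.sqrt_nonneg _), Real.norm_eq_abs]
  calc Real.sqrt (s ^ 2 * f p ^ 2 + t ^ 2 * g p ^ 2)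
      ≤ Real.sqrt (s ^ 2 * f p ^ 2) + Real.sqrt (t ^ 2 * g p ^ 2) :=
        sqrt_add_le' (by positivity) (by positivity)
    _ = |s| * |f p| + |t| * |g p| := by
        rw [show s ^ 2 * f p ^ 2 = (s * f p) ^ 2 by ring,
          show t ^ 2 * g p ^ 2 = (t * g p) ^ 2 by ring,
          Real.sqrt_sq_eq_abs, Real.sqrt_sq_eq_abs, abs_mul, abs_mul]
    _ ≤ |(|s| * |f p| + |t| * |g p|)| := le_abs_self _

lemma slot1 (a b c : ℝ) (hc : c ≠ 0) :
    Integrable (fun p : ℝ × ℝ × ℝ => a * p.1 ^ 2 /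
        Real.sqrt (a ^ 2 * p.1 ^ 2 + (b ^ 2 * p.2.1 ^ 2 + c ^ 2 * p.2.2 ^ 2))) gauss3 ∧
    HasDerivAt (fun x => V1 x b c)
      (Real.sqrt (2 * Real.pi) * ∫ p : ℝ × ℝ × ℝ, a * p.1 ^ 2 /
        Real.sqrt (a ^ 2 * p.1 ^ 2 + (b ^ 2 * p.2.1 ^ 2 + c ^ 2 * p.2.2 ^ 2)) ∂gauss3) a := by
  have hK : Measurable (fun p : ℝ × ℝ × ℝ => b ^ 2 * p.2.1 ^ 2 + c ^ 2 * p.2.2 ^ 2) :=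
    (((measurable_fst.comp measurable_snd).pow_const 2).const_mul _).add
      (((measurable_snd.comp measurable_snd).pow_const 2).const_mul _)
  have hKpos : ∀ᵐ p : ℝ × ℝ × ℝ ∂gauss3, 0 < b ^ 2 * p.2.1 ^ 2 + c ^ 2 * p.2.2 ^ 2 :=
    ae_ne_zero.mono fun p hp => by
      have hz := hp.2.2; positivity
  obtain ⟨hint, hder⟩ := key_deriv (fun p => p.1) _ measurable_fst hK hKpos int_abs_1
    (sqrtK_int (measurable_fst.comp measurable_snd) (measurable_snd.comp measurable_snd)
      int_abs_21 int_abs_22) a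
  refine ⟨hint, ?_⟩
  have heq : (fun x => V1 x b c) = fun x => Real.sqrt (2 * Real.pi) *
      ∫ p : ℝ × ℝ × ℝ, Real.sqrt (x ^ 2 * p.1 ^ 2 +
        (b ^ 2 * p.2.1 ^ 2 + c ^ 2 * p.2.2 ^ 2)) ∂gauss3 := by
    funext x; unfold V1; congr 1; congr 1; funext p; congr 1; ring
  rw [heq]
  exact hder.const_mul _

lemma slot2 (a b c : ℝ) (hc : c ≠ 0) :
    Integrable (fun p : ℝ × ℝ × ℝ => b * p.2.1 ^ 2 /
        Real.sqrt (b ^ 2 * p.2.1 ^ 2 + (a ^ 2 * p.1 ^ 2 + c ^ 2 * p.2.2 ^ 2))) gauss3 ∧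
    HasDerivAt (fun y => V1 a y c)
      (Real.sqrt (2 * Real.pi) * ∫ p : ℝ × ℝ × ℝ, b * p.2.1 ^ 2 /
        Real.sqrt (b ^ 2 * p.2.1 ^ 2 + (a ^ 2 * p.1 ^ 2 + c ^ 2 * p.2.2 ^ 2)) ∂gauss3) b := by
  have hK : Measurable (fun p : ℝ × ℝ × ℝ => a ^ 2 * p.1 ^ 2 + c ^ 2 * p.2.2 ^ 2) :=
    ((measurable_fst.pow_const 2).const_mul _).add
      (((measurable_snd.comp measurable_snd).pow_const 2).const_mul _)
  have hKpos : ∀ᵐ p : ℝ × ℝ × ℝ ∂gauss3, 0 < a ^ 2 * p.1 ^ 2 + c ^ 2 * p.2.2 ^ 2 :=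
    ae_ne_zero.mono fun p hp => by
      have hz := hp.2.2; positivity
  obtain ⟨hint, hder⟩ := key_deriv (fun p => p.2.1) _ (measurable_fst.comp measurable_snd)
    hK hKpos int_abs_21
    (sqrtK_int measurable_fst (measurable_snd.comp measurable_snd) int_abs_1 int_abs_22) b
  refine ⟨hint, ?_⟩
  have heq : (fun y => V1 a y c) = fun y => Real.sqrt (2 * Real.pi) *
      ∫ p : ℝ × ℝ × ℝ, Real.sqrt (y ^ 2 * p.2.1 ^ 2 +
        (a ^ 2 * p.1 ^ 2 + c ^ 2 * p.2.2 ^ 2)) ∂gauss3 := by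
    funext y; unfold V1; congr 1; congr 1; funext p; congr 1; ring
  rw [heq]
  exact hder.const_mul _

lemma slot3 (a b c : ℝ) (ha : a ≠ 0) :
    Integrable (fun p : ℝ × ℝ × ℝ => c * p.2.2 ^ 2 /
        Real.sqrt (c ^ 2 * p.2.2 ^ 2 + (a ^ 2 * p.1 ^ 2 + b ^ 2 * p.2.1 ^ 2))) gauss3 ∧
    HasDerivAt (fun z => V1 a b z)
      (Real.sqrt (2 * Real.pi) * ∫ p : ℝ × ℝ × ℝ, c * p.2.2 ^ 2 /
        Real.sqrt (c ^ 2 * p.2.2 ^ 2 + (a ^ 2 * p.1 ^ 2 + b ^ 2 * p.2.1 ^ 2)) ∂gauss3) c := by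
  have hK : Measurable (fun p : ℝ × ℝ × ℝ => a ^ 2 * p.1 ^ 2 + b ^ 2 * p.2.1 ^ 2) :=
    ((measurable_fst.pow_const 2).const_mul _).add
      (((measurable_fst.comp measurable_snd).pow_const 2).const_mul _)
  have hKpos : ∀ᵐ p : ℝ × ℝ × ℝ ∂gauss3, 0 < a ^ 2 * p.1 ^ 2 + b ^ 2 * p.2.1 ^ 2 :=
    ae_ne_zero.mono fun p hp => by
      have hx := hp.1; positivity
  obtain ⟨hint, hder⟩ := key_deriv (fun p => p.2.2) _ (measurable_snd.comp measurable_snd)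
    hK hKpos int_abs_22
    (sqrtK_int measurable_fst (measurable_fst.comp measurable_snd) int_abs_1 int_abs_21) c
  refine ⟨hint, ?_⟩
  have heq : (fun z => V1 a b z) = fun z => Real.sqrt (2 * Real.pi) *
      ∫ p : ℝ × ℝ × ℝ, Real.sqrt (z ^ 2 * p.2.2 ^ 2 +
        (a ^ 2 * p.1 ^ 2 + b ^ 2 * p.2.1 ^ 2)) ∂gauss3 := by
    funext z; unfold V1; congr 1; congr 1; funext p; congr 1; ring
  rw [heq]
  exact hder.const_mul _

lemma cmp12 (a b c : ℝ) (hb : 0 < b) (hc : 0 < c) (hab : b ≤ a) :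
    ((∫ p : ℝ × ℝ × ℝ, b * p.2.1 ^ 2 /
        Real.sqrt (b ^ 2 * p.2.1 ^ 2 + (a ^ 2 * p.1 ^ 2 + c ^ 2 * p.2.2 ^ 2)) ∂gauss3)
      ≤ ∫ p : ℝ × ℝ × ℝ, a * p.1 ^ 2 /
        Real.sqrt (a ^ 2 * p.1 ^ 2 + (b ^ 2 * p.2.1 ^ 2 + c ^ 2 * p.2.2 ^ 2)) ∂gauss3) ∧
    (b < a →
      (∫ p : ℝ × ℝ × ℝ, b * p.2.1 ^ 2 /
        Real.sqrt (b ^ 2 * p.2.1 ^ 2 + (a ^ 2 * p.1 ^ 2 + c ^ 2 * p.2.2 ^ 2)) ∂gauss3)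
      < ∫ p : ℝ × ℝ × ℝ, a * p.1 ^ 2 /
        Real.sqrt (a ^ 2 * p.1 ^ 2 + (b ^ 2 * p.2.1 ^ 2 + c ^ 2 * p.2.2 ^ 2)) ∂gauss3) := by
  have ha : 0 < a := lt_of_lt_of_le hb hab
  obtain ⟨hint2, -⟩ := slot2 a b c hc.ne'
  obtain ⟨hint1, -⟩ := slot1 a b c hc.ne'
  set g₂ : ℝ × ℝ × ℝ → ℝ := fun p => b * p.2.1 ^ 2 /
    Real.sqrt (b ^ 2 * p.2.1 ^ 2 + (a ^ 2 * p.1 ^ 2 + c ^ 2 * p.2.2 ^ 2)) with hg₂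
  set g₁ : ℝ × ℝ × ℝ → ℝ := fun p => a * p.1 ^ 2 /
    Real.sqrt (a ^ 2 * p.1 ^ 2 + (b ^ 2 * p.2.1 ^ 2 + c ^ 2 * p.2.2 ^ 2)) with hg₁
  have hmeas2 : AEStronglyMeasurable g₂ gauss3 := hint2.aestronglyMeasurable
  have hswap : ∫ p, g₂ p ∂gauss3 = ∫ p : ℝ × ℝ × ℝ, g₂ (p.2.1, p.1, p.2.2) ∂gauss3 := by
    conv_lhs => rw [← mp_swap12.map_eq]
    rw [integral_map mp_swap12.measurable.aemeasurable
      (by rw [mp_swap12.map_eq]; exact hmeas2)]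
  have hint2' : Integrable (fun p : ℝ × ℝ × ℝ => g₂ (p.2.1, p.1, p.2.2)) gauss3 := by
    have h := hint2
    rw [← mp_swap12.map_eq] at h
    exact (integrable_map_measure (by rw [mp_swap12.map_eq]; exact hmeas2)
      mp_swap12.measurable.aemeasurable).mp h
  have hfrac : ∀ p : ℝ × ℝ × ℝ, p.1 ≠ 0 → p.2.1 ≠ 0 → p.2.2 ≠ 0 →
      (g₂ (p.2.1, p.1, p.2.2) ≤ g₁ p ∧ (b < a → g₂ (p.2.1, p.1, p.2.2) < g₁ p)) := by
    rintro ⟨x, y, z⟩ hx hy hz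
    simp only [hg₁, hg₂]
    have hS : (0:ℝ) < a ^ 2 * x ^ 2 + (b ^ 2 * y ^ 2 + c ^ 2 * z ^ 2) := by positivity
    have hT : (0:ℝ) < b ^ 2 * x ^ 2 + (a ^ 2 * y ^ 2 + c ^ 2 * z ^ 2) := by positivity
    have h1 : b ^ 2 ≤ a ^ 2 := by nlinarith
    have hx2 : (0:ℝ) < x ^ 2 := by positivity
    constructor
    · have hd : b / Real.sqrt (b ^ 2 * x ^ 2 + (a ^ 2 * y ^ 2 + c ^ 2 * z ^ 2)) ≤
          a / Real.sqrt (a ^ 2 * x ^ 2 + (b ^ 2 * y ^ 2 + c ^ 2 * z ^ 2)) := by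
        refine div_sqrt_le hS hT ha.le hb.le ?_
        nlinarith [mul_le_mul_of_nonneg_right (mul_le_mul h1 h1 (sq_nonneg b) (sq_nonneg a))
          (sq_nonneg y), mul_le_mul_of_nonneg_right h1 (mul_nonneg (sq_nonneg c) (sq_nonneg z))]
      calc b * x ^ 2 / Real.sqrt (b ^ 2 * x ^ 2 + (a ^ 2 * y ^ 2 + c ^ 2 * z ^ 2))
          = x ^ 2 * (b / Real.sqrt (b ^ 2 * x ^ 2 + (a ^ 2 * y ^ 2 + c ^ 2 * z ^ 2))) := by ring
        _ ≤ x ^ 2 * (a / Real.sqrt (a ^ 2 * x ^ 2 + (b ^ 2 * y ^ 2 + c ^ 2 * z ^ 2))) :=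
            mul_le_mul_of_nonneg_left hd (sq_nonneg x)
        _ = a * x ^ 2 / Real.sqrt (a ^ 2 * x ^ 2 + (b ^ 2 * y ^ 2 + c ^ 2 * z ^ 2)) := by ring
    · intro hba
      have h1' : b ^ 2 < a ^ 2 := by nlinarith
      have hz2 : (0:ℝ) < c ^ 2 * z ^ 2 := by positivity
      have hd : b / Real.sqrt (b ^ 2 * x ^ 2 + (a ^ 2 * y ^ 2 + c ^ 2 * z ^ 2)) <
          a / Real.sqrt (a ^ 2 * x ^ 2 + (b ^ 2 * y ^ 2 + c ^ 2 * z ^ 2)) := by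
        refine div_sqrt_lt hS hT ha.le hb.le ?_
        nlinarith [mul_le_mul_of_nonneg_right (mul_le_mul h1 h1 (sq_nonneg b) (sq_nonneg a))
          (sq_nonneg y), mul_lt_mul_of_pos_right h1' hz2]
      calc b * x ^ 2 / Real.sqrt (b ^ 2 * x ^ 2 + (a ^ 2 * y ^ 2 + c ^ 2 * z ^ 2))
          = x ^ 2 * (b / Real.sqrt (b ^ 2 * x ^ 2 + (a ^ 2 * y ^ 2 + c ^ 2 * z ^ 2))) := by ring
        _ < x ^ 2 * (a / Real.sqrt (a ^ 2 * x ^ 2 + (b ^ 2 * y ^ 2 + c ^ 2 * z ^ 2))) :=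
            mul_lt_mul_of_pos_left hd hx2
        _ = a * x ^ 2 / Real.sqrt (a ^ 2 * x ^ 2 + (b ^ 2 * y ^ 2 + c ^ 2 * z ^ 2)) := by ring
  constructor
  · rw [hswap]
    refine integral_mono_ae hint2' hint1 (ae_ne_zero.mono fun p hp => ?_)
    exact (hfrac p hp.1 hp.2.1 hp.2.2).1
  · intro hba
    rw [hswap]
    have hpos : 0 < ∫ p : ℝ × ℝ × ℝ, (g₁ p - g₂ (p.2.1, p.1, p.2.2)) ∂gauss3 := by
      refine integral_pos_of_ae_pos (hint1.sub hint2') (ae_ne_zero.mono fun p hp => ?_)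
      exact sub_pos.mpr ((hfrac p hp.1 hp.2.1 hp.2.2).2 hba)
    rw [integral_sub hint1 hint2'] at hpos
    linarith

lemma cmp23 (a b c : ℝ) (ha : 0 < a) (hc : 0 < c) (hbc : c ≤ b) (hab : b ≤ a) :
    ((∫ p : ℝ × ℝ × ℝ, c * p.2.2 ^ 2 /
        Real.sqrt (c ^ 2 * p.2.2 ^ 2 + (a ^ 2 * p.1 ^ 2 + b ^ 2 * p.2.1 ^ 2)) ∂gauss3)
      ≤ ∫ p : ℝ × ℝ × ℝ, b * p.2.1 ^ 2 /
        Real.sqrt (b ^ 2 * p.2.1 ^ 2 + (a ^ 2 * p.1 ^ 2 + c ^ 2 * p.2.2 ^ 2)) ∂gauss3) ∧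
    (c < b →
      (∫ p : ℝ × ℝ × ℝ, c * p.2.2 ^ 2 /
        Real.sqrt (c ^ 2 * p.2.2 ^ 2 + (a ^ 2 * p.1 ^ 2 + b ^ 2 * p.2.1 ^ 2)) ∂gauss3)
      < ∫ p : ℝ × ℝ × ℝ, b * p.2.1 ^ 2 /
        Real.sqrt (b ^ 2 * p.2.1 ^ 2 + (a ^ 2 * p.1 ^ 2 + c ^ 2 * p.2.2 ^ 2)) ∂gauss3) := by
  have hb : 0 < b := lt_of_lt_of_le hc hbc
  obtain ⟨hint3, -⟩ := slot3 a b c ha.ne'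
  obtain ⟨hint2, -⟩ := slot2 a b c hc.ne'
  set g₃ : ℝ × ℝ × ℝ → ℝ := fun p => c * p.2.2 ^ 2 /
    Real.sqrt (c ^ 2 * p.2.2 ^ 2 + (a ^ 2 * p.1 ^ 2 + b ^ 2 * p.2.1 ^ 2)) with hg₃
  set g₂ : ℝ × ℝ × ℝ → ℝ := fun p => b * p.2.1 ^ 2 /
    Real.sqrt (b ^ 2 * p.2.1 ^ 2 + (a ^ 2 * p.1 ^ 2 + c ^ 2 * p.2.2 ^ 2)) with hg₂
  have hmeas3 : AEStronglyMeasurable g₃ gauss3 := hint3.aestronglyMeasurable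
  have hswap : ∫ p, g₃ p ∂gauss3 = ∫ p : ℝ × ℝ × ℝ, g₃ (p.1, p.2.2, p.2.1) ∂gauss3 := by
    conv_lhs => rw [← mp_swap23.map_eq]
    rw [integral_map mp_swap23.measurable.aemeasurable
      (by rw [mp_swap23.map_eq]; exact hmeas3)]
  have hint3' : Integrable (fun p : ℝ × ℝ × ℝ => g₃ (p.1, p.2.2, p.2.1)) gauss3 := by
    have h := hint3
    rw [← mp_swap23.map_eq] at h
    exact (integrable_map_measure (by rw [mp_swap23.map_eq]; exact hmeas3)
      mp_swap23.measurable.aemeasurable).mp h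
  have hfrac : ∀ p : ℝ × ℝ × ℝ, p.1 ≠ 0 → p.2.1 ≠ 0 → p.2.2 ≠ 0 →
      (g₃ (p.1, p.2.2, p.2.1) ≤ g₂ p ∧ (c < b → g₃ (p.1, p.2.2, p.2.1) < g₂ p)) := by
    rintro ⟨x, y, z⟩ hx hy hz
    simp only [hg₂, hg₃]
    have hS : (0:ℝ) < b ^ 2 * y ^ 2 + (a ^ 2 * x ^ 2 + c ^ 2 * z ^ 2) := by positivity
    have hT : (0:ℝ) < c ^ 2 * y ^ 2 + (a ^ 2 * x ^ 2 + b ^ 2 * z ^ 2) := by positivity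
    have h1 : c ^ 2 ≤ b ^ 2 := by nlinarith
    have hy2 : (0:ℝ) < y ^ 2 := by positivity
    constructor
    · have hd : c / Real.sqrt (c ^ 2 * y ^ 2 + (a ^ 2 * x ^ 2 + b ^ 2 * z ^ 2)) ≤
          b / Real.sqrt (b ^ 2 * y ^ 2 + (a ^ 2 * x ^ 2 + c ^ 2 * z ^ 2)) := by
        refine div_sqrt_le hS hT hb.le hc.le ?_
        nlinarith [mul_le_mul_of_nonneg_right h1 (mul_nonneg (sq_nonneg a) (sq_nonneg x)),
          mul_le_mul_of_nonneg_right (mul_le_mul h1 h1 (sq_nonneg c) (sq_nonneg b))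
            (sq_nonneg z)]
      calc c * y ^ 2 / Real.sqrt (c ^ 2 * y ^ 2 + (a ^ 2 * x ^ 2 + b ^ 2 * z ^ 2))
          = y ^ 2 * (c / Real.sqrt (c ^ 2 * y ^ 2 + (a ^ 2 * x ^ 2 + b ^ 2 * z ^ 2))) := by ring
        _ ≤ y ^ 2 * (b / Real.sqrt (b ^ 2 * y ^ 2 + (a ^ 2 * x ^ 2 + c ^ 2 * z ^ 2))) :=
            mul_le_mul_of_nonneg_left hd (sq_nonneg y)
        _ = b * y ^ 2 / Real.sqrt (b ^ 2 * y ^ 2 + (a ^ 2 * x ^ 2 + c ^ 2 * z ^ 2)) := by ring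
    · intro hcb
      have h1' : c ^ 2 < b ^ 2 := by nlinarith
      have hx2 : (0:ℝ) < a ^ 2 * x ^ 2 := by positivity
      have hd : c / Real.sqrt (c ^ 2 * y ^ 2 + (a ^ 2 * x ^ 2 + b ^ 2 * z ^ 2)) <
          b / Real.sqrt (b ^ 2 * y ^ 2 + (a ^ 2 * x ^ 2 + c ^ 2 * z ^ 2)) := by
        refine div_sqrt_lt hS hT hb.le hc.le ?_
        nlinarith [mul_lt_mul_of_pos_right h1' hx2,
          mul_le_mul_of_nonneg_right (mul_le_mul h1 h1 (sq_nonneg c) (sq_nonneg b))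
            (sq_nonneg z)]
      calc c * y ^ 2 / Real.sqrt (c ^ 2 * y ^ 2 + (a ^ 2 * x ^ 2 + b ^ 2 * z ^ 2))
          = y ^ 2 * (c / Real.sqrt (c ^ 2 * y ^ 2 + (a ^ 2 * x ^ 2 + b ^ 2 * z ^ 2))) := by ring
        _ < y ^ 2 * (b / Real.sqrt (b ^ 2 * y ^ 2 + (a ^ 2 * x ^ 2 + c ^ 2 * z ^ 2))) :=
            mul_lt_mul_of_pos_left hd hy2
        _ = b * y ^ 2 / Real.sqrt (b ^ 2 * y ^ 2 + (a ^ 2 * x ^ 2 + c ^ 2 * z ^ 2)) := by ring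
  constructor
  · rw [hswap]
    refine integral_mono_ae hint3' hint2 (ae_ne_zero.mono fun p hp => ?_)
    exact (hfrac p hp.1 hp.2.1 hp.2.2).1
  · intro hcb
    rw [hswap]
    have hpos : 0 < ∫ p : ℝ × ℝ × ℝ, (g₂ p - g₃ (p.1, p.2.2, p.2.1)) ∂gauss3 := by
      refine integral_pos_of_ae_pos (hint2.sub hint3') (ae_ne_zero.mono fun p hp => ?_)
      exact sub_pos.mpr ((hfrac p hp.1 hp.2.1 hp.2.2).2 hcb)
    rw [integral_sub hint2 hint3'] at hpos
    linarith

theorem stmt_9 (a b c : ℝ) (hab : a ≥ b) (hbc : b ≥ c) (hc : c > 0) :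
    deriv (fun x => V1 x b c) a ≥ deriv (fun y => V1 a y c) b ∧
    deriv (fun y => V1 a y c) b ≥ deriv (fun z => V1 a b z) c ∧
    (a > b → deriv (fun x => V1 x b c) a > deriv (fun y => V1 a y c) b) ∧
    (b > c → deriv (fun y => V1 a y c) b > deriv (fun z => V1 a b z) c) := by
  have hb : 0 < b := lt_of_lt_of_le hc hbc
  have ha : 0 < a := lt_of_lt_of_le hb hab
  obtain ⟨-, hd1⟩ := slot1 a b c hc.ne'
  obtain ⟨-, hd2⟩ := slot2 a b c hc.ne'
  obtain ⟨-, hd3⟩ := slot3 a b c ha.ne'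
  have e1 := hd1.deriv
  have e2 := hd2.deriv
  have e3 := hd3.deriv
  have hsq : 0 < Real.sqrt (2 * Real.pi) := Real.sqrt_pos.2 (by positivity)
  obtain ⟨h12, h12s⟩ := cmp12 a b c hb hc hab
  obtain ⟨h23, h23s⟩ := cmp23 a b c ha hc hbc hab
  refine ⟨?_, ?_, ?_, ?_⟩
  · rw [e1, e2]; exact mul_le_mul_of_nonneg_left h12 hsq.le
  · rw [e2, e3]; exact mul_le_mul_of_nonneg_left h23 hsq.le
  · intro hba; rw [e1, e2]; exact mul_lt_mul_of_pos_left (h12s hba) hsq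
  · intro hcb; rw [e2, e3]; exact mul_lt_mul_of_pos_left (h23s hcb) hsq
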